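/- arXiv:2210.15820 — 2 statements merged into one kernel-verified Lean document; each statement's English description precedes it below -/
import Mathlib

section
/- For any CP map Λ1 ⊗ Λ2 where Λ1 and Λ2 each have Kraus representations with real Kraus operators, the map commutes with partial transpose on the second system: (Λ1 ⊗ Λ2)(ρ^{T_B}) = ((Λ1 ⊗ Λ2)(ρ))^{T_B} for every matrix ρ on the tensor product space. -/
open Matrix
open scoped ComplexOrder

/-- Singular values of a complex square matrix: square roots of eigenvalues of `Aᴴ * A`. -/
noncomputable def singularValues {n : Type*} [Fintype n] [DecidableEq n]
    (A : Matrix n n ℂ) : n → ℝ :=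
  fun i => Real.sqrt ((Matrix.isHermitian_conjTranspose_mul_self A).eigenvalues i)

/-- Trace norm: sum of singular values. -/
noncomputable def traceNorm {n : Type*} [Fintype n] [DecidableEq n]
    (A : Matrix n n ℂ) : ℝ := ∑ i, singularValues A i

/-- The square root of a positive semidefinite matrix (the former `Matrix.PosSemidef.sqrt`). -/
noncomputable def Matrix.PosSemidef.sqrt {n : Type*} [Fintype n] [DecidableEq n]
    {A : Matrix n n ℂ} (hA : A.PosSemidef) : Matrix n n ℂ :=
  hA.1.eigenvectorUnitary.1 * diagonal ((↑) ∘ (√·) ∘ hA.1.eigenvalues) *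
    (star hA.1.eigenvectorUnitary : Matrix n n ℂ)

/-- Positive-semidefinite square root (zero for non-PSD input). -/
noncomputable def msqrt {n : Type*} [Fintype n] [DecidableEq n]
    (A : Matrix n n ℂ) : Matrix n n ℂ :=
  open scoped Classical in
  if h : A.PosSemidef then h.sqrt else 0

/-- Root fidelity √F(ρ,σ) = Tr √(√ρ σ √ρ). -/
noncomputable def rootFid {n : Type*} [Fintype n] [DecidableEq n]
    (ρ σ : Matrix n n ℂ) : ℝ := ((msqrt (msqrt ρ * σ * msqrt ρ)).trace).re

/-- A density matrix: positive semidefinite with unit trace. -/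
def IsDensity {n : Type*} [Fintype n] [DecidableEq n] (ρ : Matrix n n ℂ) : Prop :=
  ρ.PosSemidef ∧ ρ.trace = 1

/-- Partial transpose on the second tensor factor. -/
noncomputable def ptB {dA dB : ℕ} (X : Matrix (Fin dA × Fin dB) (Fin dA × Fin dB) ℂ) :
    Matrix (Fin dA × Fin dB) (Fin dA × Fin dB) ℂ :=
  Matrix.of fun p q => X (p.1, q.2) (q.1, p.2)

/-- Hermitian inner product ⟨x,y⟩ = ∑ conj(xᵢ) yᵢ. -/
noncomputable def hinner {ι : Type*} [Fintype ι] (x y : ι → ℂ) : ℂ := ∑ i, star (x i) * y i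

/-- Entrywise complex conjugate of a vector. -/
noncomputable def cconj {ι : Type*} (x : ι → ℂ) : ι → ℂ := fun i => star (x i)
open Kronecker

/-- a tensor product of maps with real Kraus operators commutes with
partial transpose on the second system. -/
theorem real_tensor_ptB_covariant {dA dB nA nB : ℕ}
    (A : Fin nA → Matrix (Fin dA) (Fin dA) ℂ)
    (B : Fin nB → Matrix (Fin dB) (Fin dB) ℂ)
    (hA : ∀ i a b, (A i a b).im = 0) (hB : ∀ j a b, (B j a b).im = 0)
    (ρ : Matrix (Fin dA × Fin dB) (Fin dA × Fin dB) ℂ) :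
    ∑ i, ∑ j, (A i ⊗ₖ B j) * ptB ρ * (A i ⊗ₖ B j)ᴴ
      = ptB (∑ i, ∑ j, (A i ⊗ₖ B j) * ρ * (A i ⊗ₖ B j)ᴴ) := by
  have hstar : ∀ j a b, star (B j a b) = B j a b := by
    intro j a b
    exact Complex.ext rfl (by simp [hB j a b])
  ext ⟨p1, p2⟩ ⟨q1, q2⟩
  simp only [ptB, Matrix.sum_apply, Matrix.of_apply, Matrix.mul_apply,
    Matrix.conjTranspose_apply, Matrix.kroneckerMap_apply, Fintype.sum_prod_type]
  refine Finset.sum_congr rfl fun i _ => Finset.sum_congr rfl fun j _ => ?_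
  refine Finset.sum_congr rfl fun r1 _ => ?_
  simp only [Finset.sum_mul]
  rw [Finset.sum_comm]
  conv_rhs => rw [Finset.sum_comm]
  refine Finset.sum_congr rfl fun x1 _ => ?_
  rw [Finset.sum_comm]
  refine Finset.sum_congr rfl fun x2 _ => Finset.sum_congr rfl fun x _ => ?_
  simp only [star_mul', hstar]
  ring
end

section
/- For a unit vector ψ ∈ ℂ^d, the geometric measure of imaginarity I_g(ψ) := 1 − max over real unit vectors φ of |⟨φ,ψ⟩|² equals (1 − |⟨ψ*, ψ⟩|)/2, where ψ* is the entrywise complex conjugate of ψ. -/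
open Matrix
open scoped ComplexOrder

open Finset in
lemma key_real {d : ℕ} (f a b : Fin d → ℝ)
    (hf : ∑ i, f i ^ 2 = 1) (hab : ∑ i, a i * b i = 0)
    (hBA : ∑ i, b i ^ 2 ≤ ∑ i, a i ^ 2) :
    (∑ i, f i * a i) ^ 2 + (∑ i, f i * b i) ^ 2 ≤ ∑ i, a i ^ 2 := by
  set p := ∑ i, f i * a i with hp'
  set q := ∑ i, f i * b i with hq'
  set A := ∑ i, a i ^ 2 with hA'
  set B := ∑ i, b i ^ 2 with hB'
  have hA0 : (0:ℝ) ≤ A := Finset.sum_nonneg fun i _ => sq_nonneg _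
  have hB0 : (0:ℝ) ≤ B := Finset.sum_nonneg fun i _ => sq_nonneg _
  have hp : p ^ 2 ≤ A := by
    have := Finset.sum_mul_sq_le_sq_mul_sq Finset.univ f a
    rw [hf] at this; simpa using this
  have hq : q ^ 2 ≤ B := by
    have := Finset.sum_mul_sq_le_sq_mul_sq Finset.univ f b
    rw [hf] at this; simpa using this
  have h1 : (p^2*B + q^2*A)^2 ≤ A*B*(p^2*B + q^2*A) := by
    have hcs := Finset.sum_mul_sq_le_sq_mul_sq Finset.univ f
      (fun i => p*B*a i + q*A*b i)
    have hfv : ∑ i, f i * (p*B*a i + q*A*b i) = p^2*B + q^2*A := by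
      rw [Finset.sum_congr rfl
        (fun i _ => show f i * (p*B*a i + q*A*b i)
          = p*B*(f i * a i) + q*A*(f i * b i) by ring),
        Finset.sum_add_distrib, ← Finset.mul_sum, ← Finset.mul_sum, ← hp', ← hq']
      ring
    have hvv : ∑ i, (p*B*a i + q*A*b i)^2 = p^2*B^2*A + q^2*A^2*B := by
      rw [Finset.sum_congr rfl
        (fun i _ => show (p*B*a i + q*A*b i)^2
          = p^2*B^2*(a i ^2) + q^2*A^2*(b i^2) + 2*p*q*A*B*(a i * b i) by ring),
        Finset.sum_add_distrib, Finset.sum_add_distrib,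
        ← Finset.mul_sum, ← Finset.mul_sum, ← Finset.mul_sum, ← hA', ← hB', hab]
      ring
    rw [hfv, hf, hvv] at hcs
    nlinarith [hcs]
  have hS0 : 0 ≤ p^2*B + q^2*A :=
    add_nonneg (mul_nonneg (sq_nonneg _) hB0) (mul_nonneg (sq_nonneg _) hA0)
  have hS : p^2*B + q^2*A ≤ A*B := by
    rcases hS0.eq_or_lt with h | h
    · rw [← h]; exact mul_nonneg hA0 hB0
    · nlinarith [h1, h]
  rcases hB0.eq_or_lt with h | h
  · have hq0 : q^2 ≤ 0 := by rw [h]; exact hq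
    nlinarith [sq_nonneg q, hp]
  · nlinarith [hS, hq, hBA, h]

-- helper: hinner with real first argument
lemma hinner_real_re {d : ℕ} (f : Fin d → ℝ) (x : Fin d → ℂ) :
    (hinner (fun i => (f i : ℂ)) x).re = ∑ i, f i * (x i).re := by
  rw [hinner, Complex.re_sum]
  refine Finset.sum_congr rfl fun i _ => ?_
  simp [Complex.mul_re]

lemma hinner_real_im {d : ℕ} (f : Fin d → ℝ) (x : Fin d → ℂ) :
    (hinner (fun i => (f i : ℂ)) x).im = ∑ i, f i * (x i).im := by
  rw [hinner, Complex.im_sum]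
  refine Finset.sum_congr rfl fun i _ => ?_
  simp [Complex.mul_im]

/-- for a unit vector ψ, the maximum of |⟨φ,ψ⟩|² over real unit vectors φ
is (1+|⟨ψ*,ψ⟩|)/2, so that 1 minus this maximum equals (1−|⟨ψ*,ψ⟩|)/2. -/
theorem geometric_imaginarity_pure {d : ℕ} (ψ : Fin d → ℂ) (hψ : hinner ψ ψ = 1) :
    ∃ M : ℝ, IsGreatest
        {t : ℝ | ∃ φ : Fin d → ℂ, (∀ i, (φ i).im = 0) ∧ hinner φ φ = 1 ∧
          t = ‖hinner φ ψ‖ ^ 2} M ∧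
      1 - M = (1 - ‖hinner (cconj ψ) ψ‖) / 2 := by
  classical
  set s : ℂ := hinner (cconj ψ) ψ with hs
  have hs' : s = ∑ i, ψ i * ψ i := by
    simp [hs, hinner, cconj]
  set c : ℝ := ‖s‖ with hc
  have hc0 : 0 ≤ c := norm_nonneg s
  set ω : ℂ := Complex.exp ((-(s.arg / 2) : ℝ) * Complex.I) with hω
  have habsω : ‖ω‖ = 1 := Complex.norm_exp_ofReal_mul_I _
  have hωs : ω * ω * s = (c : ℂ) := by
    conv_lhs => rw [← Complex.norm_mul_exp_arg_mul_I s]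
    rw [hω, ← Complex.exp_add, ← hc]
    have h2 : ((-(s.arg / 2) : ℝ) : ℂ) * Complex.I + ((-(s.arg / 2) : ℝ)) * Complex.I
        = -((s.arg : ℝ) * Complex.I) := by push_cast; ring
    rw [h2]
    rw [mul_comm ((c:ℂ)) _, ← mul_assoc, ← Complex.exp_add]
    simp
  set a : Fin d → ℝ := fun i => (ω * ψ i).re with ha
  set b : Fin d → ℝ := fun i => (ω * ψ i).im with hb
  -- norm fact
  have hnorm : ∑ i, (a i ^ 2 + b i ^ 2) = 1 := by
    have h1 : ∀ i, a i ^ 2 + b i ^ 2 = Complex.normSq (ψ i) := by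
      intro i
      have : Complex.normSq (ω * ψ i) = Complex.normSq (ψ i) := by
        rw [Complex.normSq_mul, ← Complex.sq_norm ω, habsω]; simp
      rw [← this, Complex.normSq_apply, ha, hb]; ring
    rw [Finset.sum_congr rfl fun i _ => h1 i]
    have h2 : (↑(∑ i, Complex.normSq (ψ i)) : ℂ) = 1 := by
      rw [← hψ, hinner]
      push_cast
      refine Finset.sum_congr rfl fun i _ => ?_
      rw [Complex.normSq_eq_conj_mul_self]; rfl
    exact_mod_cast h2
  -- phase fact
  have hphase : (∑ i, (ω * ψ i) * (ω * ψ i)) = (c : ℂ) := by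
    rw [← hωs, hs']
    rw [Finset.mul_sum]
    exact Finset.sum_congr rfl fun i _ => by ring
  have hphase_re : ∑ i, (a i ^ 2 - b i ^ 2) = c := by
    have := congrArg Complex.re hphase
    rw [Complex.re_sum] at this
    simpa [Complex.mul_re, ha, hb, sq] using this
  have hphase_im : ∑ i, a i * b i = 0 := by
    have := congrArg Complex.im hphase
    rw [Complex.im_sum] at this
    simp only [Complex.mul_im, Complex.ofReal_im] at this
    have h2 : ∑ i, (a i * b i + b i * a i) = 0 := by
      simpa [ha, hb] using this
    have h3 : (2:ℝ) * ∑ i, a i * b i = 0 := by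
      rw [Finset.mul_sum]
      rw [← h2]
      exact Finset.sum_congr rfl fun i _ => by ring
    linarith
  set A : ℝ := ∑ i, a i ^ 2 with hA
  set B : ℝ := ∑ i, b i ^ 2 with hB
  have hsumAB : A + B = 1 := by
    rw [hA, hB, ← Finset.sum_add_distrib]; exact hnorm
  have hsubAB : A - B = c := by
    rw [hA, hB, ← Finset.sum_sub_distrib]; exact hphase_re
  have hAval : A = (1 + c) / 2 := by linarith
  have hBval : B = (1 - c) / 2 := by linarith
  have hApos : 0 < A := by rw [hAval]; linarith
  -- hinner φ ψ vs ω-rotated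
  have hrot : ∀ φ : Fin d → ℂ, hinner φ (fun i => ω * ψ i) = ω * hinner φ ψ := by
    intro φ
    rw [hinner, hinner, Finset.mul_sum]
    exact Finset.sum_congr rfl fun i _ => by ring
  refine ⟨(1 + c) / 2, ⟨⟨fun i => ((a i / Real.sqrt A : ℝ) : ℂ), ?_, ?_, ?_⟩, ?_⟩, by ring⟩
  · intro i; exact Complex.ofReal_im _
  · -- unit norm of candidate
    rw [hinner]
    have : ∀ i : Fin d, star ((a i / Real.sqrt A : ℝ) : ℂ) * ((a i / Real.sqrt A : ℝ) : ℂ)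
        = (((a i / Real.sqrt A) ^ 2 : ℝ) : ℂ) := by
      intro i
      rw [show star ((a i / Real.sqrt A : ℝ) : ℂ) = ((a i / Real.sqrt A : ℝ) : ℂ) by
        simp [Complex.star_def, Complex.conj_ofReal]]
      push_cast; ring
    rw [Finset.sum_congr rfl fun i _ => this i, ← Complex.ofReal_sum]
    have h2 : ∑ i, (a i / Real.sqrt A) ^ 2 = 1 := by
      have : ∀ i : Fin d, (a i / Real.sqrt A) ^ 2 = a i ^ 2 / A := by
        intro i; rw [div_pow, Real.sq_sqrt hApos.le]
      rw [Finset.sum_congr rfl fun i _ => this i, ← Finset.sum_div, ← hA,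
        div_self hApos.ne']
    rw [h2]; simp
  · -- value
    have hval : hinner (fun i => ((a i / Real.sqrt A : ℝ) : ℂ)) (fun i => ω * ψ i)
        = (Real.sqrt A : ℂ) := by
      apply Complex.ext
      · rw [hinner_real_re]
        have : ∑ i, a i / Real.sqrt A * (ω * ψ i).re = (∑ i, a i ^ 2) / Real.sqrt A := by
          rw [Finset.sum_div]
          exact Finset.sum_congr rfl fun i _ => by show a i / Real.sqrt A * a i = _; ring
        rw [this, ← hA, Complex.ofReal_re]
        exact Real.div_sqrt
      · rw [hinner_real_im]
        have : ∑ i, a i / Real.sqrt A * (ω * ψ i).im = (∑ i, a i * b i) / Real.sqrt A := by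
          rw [Finset.sum_div]
          exact Finset.sum_congr rfl fun i _ => by show a i / Real.sqrt A * b i = _; ring
        rw [this, hphase_im, Complex.ofReal_im]; simp
    have habs : ‖hinner (fun i => ((a i / Real.sqrt A : ℝ) : ℂ)) ψ‖
        = Real.sqrt A := by
      have h1 := hrot (fun i => ((a i / Real.sqrt A : ℝ) : ℂ))
      have h2 := congrArg norm h1
      rw [hval, norm_mul, habsω, one_mul] at h2
      rw [← h2, Complex.norm_real, Real.norm_eq_abs, abs_of_nonneg (Real.sqrt_nonneg _)]
    rw [habs, Real.sq_sqrt hApos.le, hAval]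
  · -- upper bound
    rintro t ⟨φ, hφim, hφn, rfl⟩
    set f : Fin d → ℝ := fun i => (φ i).re with hf
    have hφeq : φ = fun i => ((f i : ℝ) : ℂ) := by
      funext i; apply Complex.ext
      · simp [hf]
      · simp [hφim i]
    have hf1 : ∑ i, f i ^ 2 = 1 := by
      have h2 : (↑(∑ i, f i ^ 2) : ℂ) = 1 := by
        rw [← hφn, hφeq, hinner]
        push_cast
        refine Finset.sum_congr rfl fun i _ => ?_
        rw [show star ((f i : ℝ) : ℂ) = ((f i : ℝ) : ℂ) by
          simp [Complex.star_def, Complex.conj_ofReal]]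
        push_cast; ring
      exact_mod_cast h2
    have hkey := key_real f a b hf1 hphase_im (by rw [← hA, ← hB]; linarith)
    have habs2 : ‖hinner φ ψ‖ ^ 2
        = (∑ i, f i * a i) ^ 2 + (∑ i, f i * b i) ^ 2 := by
      have h1 := hrot φ
      have h2 : ‖hinner φ (fun i => ω * ψ i)‖ = ‖hinner φ ψ‖ := by
        rw [h1, norm_mul, habsω, one_mul]
      rw [← h2, Complex.sq_norm, Complex.normSq_apply, hφeq,
        hinner_real_re, hinner_real_im]
      simp only [← ha, ← hb, sq]
      rfl
    rw [habs2, ← hAval]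
    exact hkey
end
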